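/- For every integer N ≥ 1, every m ≥ 1, every permutation α of {1,…,m}, and all 1 ≤ k,l ≤ N, the N×N matrix M_α = Σ_{i₁,…,i_m=1}^N X_{i₁ i_{α(1)}} X_{i₂ i_{α(2)}} ⋯ X_{i_m i_{α(m)}} commutes with X_{kl}: M_α · X_{kl} = X_{kl} · M_α. -/

import Mathlib

open Matrix

/-- The standard generators `X_{ij} = E_{ij} - E_{N+1-j, N+1-i}` of `so(N)`,
as `N × N` matrices over `ℚ` (indices zero-based, so `N+1-i` becomes `Fin.rev i`). -/
noncomputable def soGen (N : ℕ) (i j : Fin N) : Matrix (Fin N) (Fin N) ℚ :=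
  Matrix.single i j 1 - Matrix.single j.rev i.rev 1

/-- `W_N(α) = Tr (Σ_{i₁,…,i_m} X_{i₁ i_{α(1)}} ⋯ X_{i_m i_{α(m)}})`,
the (un-normalized) standard-representation so(N) weight of a permutation
`α` of `{1,…,m}`; the product is taken in order of increasing position. -/
noncomputable def soWeight (N m : ℕ) (α : Equiv.Perm (Fin m)) : ℚ :=
  Matrix.trace (∑ i : Fin m → Fin N,
    ((List.finRange m).map fun k => soGen N (i k) (i (α k))).prod)

/-- auxiliary: product of E-matrices -/
lemma soE_mul (N : ℕ) (a b c d : Fin N) :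
    (Matrix.single a b (1:ℚ)) * Matrix.single c d 1
      = if b = c then Matrix.single a d 1 else 0 := by
  split_ifs with h
  · subst h
    simpa using Matrix.single_mul_single_same (c := (1:ℚ)) a b d 1
  · exact Matrix.single_mul_single_of_ne (c := (1:ℚ)) a b c h 1

lemma soGen_apply (N : ℕ) (a b x y : Fin N) :
    soGen N a b x y = (if a = x ∧ b = y then (1:ℚ) else 0)
      - (if b.rev = x ∧ a.rev = y then (1:ℚ) else 0) := by
  simp [soGen, Matrix.single]

lemma soSumL (N : ℕ) (k l c : Fin N) (M : Fin N → Matrix (Fin N) (Fin N) ℚ) :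
    (∑ e, soGen N k l e c • M e)
      = (if l = c then M k else 0) - (if k.rev = c then M l.rev else 0) := by
  simp [soGen_apply, sub_smul, Finset.sum_sub_distrib, ite_and, ite_smul,
    Finset.sum_ite_eq, Finset.sum_ite_eq']

lemma soSumR (N : ℕ) (k l d : Fin N) (M : Fin N → Matrix (Fin N) (Fin N) ℚ) :
    (∑ e, soGen N k l d e • M e)
      = (if k = d then M l else 0) - (if l.rev = d then M k.rev else 0) := by
  simp [soGen_apply, sub_smul, Finset.sum_sub_distrib, ite_and, ite_smul,
    Finset.sum_ite_eq, Finset.sum_ite_eq']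

/-- the basic commutator identity: ad of a generator acts on indices -/
lemma soKey (N : ℕ) (k l c d : Fin N) :
    soGen N k l * soGen N c d - soGen N c d * soGen N k l
      = (∑ e, soGen N k l e c • soGen N e d) - ∑ e, soGen N k l d e • soGen N c e := by
  rw [soSumL, soSumR]
  simp only [soGen, sub_mul, mul_sub, soE_mul, Fin.rev_inj, Fin.rev_eq_iff, Fin.rev_rev]
  have e1 : (d = k) = (k = d) := by ext; exact eq_comm
  have e2 : (c = l) = (l = c) := by ext; exact eq_comm
  have e3 : (c = k.rev) = (k = c.rev) := by ext; rw [eq_comm, Fin.rev_eq_iff, eq_comm]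
  have e4 : (d = l.rev) = (l = d.rev) := by ext; rw [eq_comm, Fin.rev_eq_iff, eq_comm]
  simp only [e1, e2, e3, e4]
  split_ifs <;> abel

/-- a one-position-modified product factors as `P1 * B * P2` -/
lemma soProdFactor {ι M : Type*} [Monoid M] [DecidableEq ι] (L : List ι) (g : ι → M) (p : ι)
    (hp : p ∈ L) (hnd : L.Nodup) :
    ∃ P1 P2 : M, ∀ B : M,
      (L.map fun r => if r = p then B else g r).prod = P1 * B * P2 := by
  induction L with
  | nil => simp at hp
  | cons x T ih =>
    rcases List.nodup_cons.1 hnd with ⟨hx, hT⟩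
    rcases List.mem_cons.1 hp with h | h
    · subst h
      refine ⟨1, (T.map g).prod, fun B => ?_⟩
      have hTg : (T.map fun r => if r = p then B else g r) = T.map g :=
        List.map_congr_left fun r hr => if_neg ((fun hh => hx (hh ▸ hr) : r = p → False) : ¬ r = p)
      simp only [List.map_cons, List.prod_cons, if_pos rfl, ite_true, one_mul, hTg]
    · obtain ⟨P1, P2, hP⟩ := ih h hT
      have hxp : x ≠ p := fun hh => hx (hh ▸ h)
      refine ⟨g x * P1, P2, fun B => ?_⟩
      simp [List.prod_cons, if_neg hxp, hP B, mul_assoc]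

/-- Leibniz rule for the commutator of a list product -/
lemma soLeibniz {ι R : Type*} [Ring R] [DecidableEq ι] (A : R) (L : List ι) (g : ι → R)
    (hnd : L.Nodup) :
    A * (L.map g).prod - (L.map g).prod * A
      = (L.map fun p =>
          (L.map fun r => if r = p then A * g p - g p * A else g r).prod).sum := by
  induction L with
  | nil => simp
  | cons x T ih =>
    rcases List.nodup_cons.1 hnd with ⟨hx, hT⟩
    have hTg : (T.map fun r => if r = x then A * g x - g x * A else g r) = T.map g :=
      List.map_congr_left fun r hr => if_neg ((fun hh => hx (hh ▸ hr) : r = x → False) : ¬ r = x)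
    have h2 : (T.map fun p =>
          ((if x = p then A * g p - g p * A else g x) *
            (T.map fun r => if r = p then A * g p - g p * A else g r).prod)).sum
        = g x * (T.map fun p =>
            (T.map fun r => if r = p then A * g p - g p * A else g r).prod).sum := by
      have hmap : (T.map fun p =>
          ((if x = p then A * g p - g p * A else g x) *
            (T.map fun r => if r = p then A * g p - g p * A else g r).prod))
          = T.map fun p => g x *
            (T.map fun r => if r = p then A * g p - g p * A else g r).prod :=
        List.map_congr_left fun p hp => by
          rw [if_neg ((fun hh => hx (hh ▸ hp) : x = p → False) : ¬ x = p)]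
      rw [hmap]
      exact List.sum_map_mul_left _ _ _
    simp only [List.map_cons, List.prod_cons, List.sum_cons, ite_true, if_pos rfl, hTg, h2,
      ← ih hT]
    simp only [mul_sub, sub_mul, mul_assoc]
    abel

/-- replace the commutator at position `p` using `soKey`, pulling sums and scalars out -/
lemma soStep (N m : ℕ) (α : Equiv.Perm (Fin m)) (k l : Fin N)
    (i : Fin m → Fin N) (p : Fin m) :
    ((List.finRange m).map fun r =>
        if r = p then soGen N k l * soGen N (i p) (i (α p))
            - soGen N (i p) (i (α p)) * soGen N k l
        else soGen N (i r) (i (α r))).prod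
      = (∑ e, soGen N k l e (i p) •
            ((List.finRange m).map fun r =>
              if r = p then soGen N e (i (α p)) else soGen N (i r) (i (α r))).prod)
        - ∑ e, soGen N k l (i (α p)) e •
            ((List.finRange m).map fun r =>
              if r = p then soGen N (i p) e else soGen N (i r) (i (α r))).prod := by
  obtain ⟨P1, P2, hP⟩ := soProdFactor (List.finRange m)
    (fun r => soGen N (i r) (i (α r))) p (List.mem_finRange p) (List.nodup_finRange m)
  rw [hP, soKey]
  simp only [hP]
  simp only [mul_sub, sub_mul, Finset.mul_sum, Finset.sum_mul, mul_smul_comm, smul_mul_assoc]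

/-- reindexing: the first sum at position `p` equals the second sum at position `α⁻¹ p` -/
lemma soSwap (N m : ℕ) (α : Equiv.Perm (Fin m)) (k l : Fin N) (p : Fin m) :
    (∑ i : Fin m → Fin N, ∑ e, soGen N k l e (i p) •
        ((List.finRange m).map fun r =>
          if r = p then soGen N e (i (α p)) else soGen N (i r) (i (α r))).prod)
      = ∑ i : Fin m → Fin N, ∑ e, soGen N k l (i (α (α.symm p))) e •
          ((List.finRange m).map fun r =>
            if r = α.symm p then soGen N (i (α.symm p)) e
            else soGen N (i r) (i (α r))).prod := by
  classical
  have hq : α (α.symm p) = p := α.apply_symm_apply p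
  set q := α.symm p with hqdef
  have hinv : Function.Involutive (fun x : (Fin m → Fin N) × Fin N =>
      (Function.update x.1 p x.2, x.1 p)) := by
    rintro ⟨i, e⟩
    simp
  rw [← Finset.sum_product' (s := Finset.univ) (t := Finset.univ),
    ← Finset.sum_product' (s := Finset.univ) (t := Finset.univ)]
  refine Finset.sum_nbij' (fun x => (Function.update x.1 p x.2, x.1 p))
    (fun x => (Function.update x.1 p x.2, x.1 p))
    (fun a _ => Finset.mem_univ _) (fun a _ => Finset.mem_univ _)
    (fun a _ => hinv a) (fun a _ => hinv a) ?_
  rintro ⟨i, e⟩ -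
  show soGen N k l e (i p) •
      ((List.finRange m).map fun r =>
        if r = p then soGen N e (i (α p)) else soGen N (i r) (i (α r))).prod
    = soGen N k l (Function.update i p e (α q)) (i p) •
      ((List.finRange m).map fun r =>
        if r = q then soGen N (Function.update i p e q) (i p)
        else soGen N (Function.update i p e r) (Function.update i p e (α r))).prod
  have hprodfun : (fun r => if r = p then soGen N e (i (α p))
        else soGen N (i r) (i (α r)))
      = fun r => if r = q then soGen N (Function.update i p e q) (i p)
          else soGen N (Function.update i p e r) (Function.update i p e (α r)) := by
    funext r
    by_cases hrp : r = p
    · subst hrp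
      by_cases hrq : r = q
      · have hap : α r = r := by nth_rewrite 1 [hrq]; exact hq
        rw [if_pos rfl, if_pos hrq, hap, ← hrq, Function.update_self]
      · have hap : α r ≠ r := fun hh => hrq (α.injective (hh.trans hq.symm))
        rw [if_pos rfl, if_neg hrq, Function.update_self,
          Function.update_of_ne hap]
    · by_cases hrq : r = q
      · subst hrq
        rw [if_neg hrp, if_pos rfl, hq, Function.update_of_ne hrp]
      · have har : α r ≠ p := fun hh => hrq (α.injective (hh.trans hq.symm))
        rw [if_neg hrp, if_neg hrq, Function.update_of_ne hrp,
          Function.update_of_ne har]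
  rw [hq, Function.update_self, hprodfun]


/-- The matrix `M_α = Σ_{i₁,…,i_m} X_{i₁ i_{α(1)}} ⋯ X_{i_m i_{α(m)}}` commutes
with every generator `X_{kl}` (it is the standard-representation image of a
central element of `U so(N)`). -/
theorem soMatrix_commutes (N m : ℕ) (hN : 1 ≤ N) (hm : 1 ≤ m)
    (α : Equiv.Perm (Fin m)) (k l : Fin N) :
    (∑ i : Fin m → Fin N,
        ((List.finRange m).map fun j => soGen N (i j) (i (α j))).prod) * soGen N k l =
      soGen N k l *
        (∑ i : Fin m → Fin N,
          ((List.finRange m).map fun j => soGen N (i j) (i (α j))).prod) := by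
  classical
  have hcomm : soGen N k l * (∑ i : Fin m → Fin N,
        ((List.finRange m).map fun j => soGen N (i j) (i (α j))).prod)
      - (∑ i : Fin m → Fin N,
        ((List.finRange m).map fun j => soGen N (i j) (i (α j))).prod) * soGen N k l = 0 := by
    rw [Finset.mul_sum, Finset.sum_mul, ← Finset.sum_sub_distrib]
    have h1 : ∀ i : Fin m → Fin N,
        soGen N k l * ((List.finRange m).map fun j => soGen N (i j) (i (α j))).prod
          - ((List.finRange m).map fun j => soGen N (i j) (i (α j))).prod * soGen N k l
        = ∑ p : Fin m,
            ((List.finRange m).map fun r =>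
              if r = p then soGen N k l * soGen N (i p) (i (α p))
                  - soGen N (i p) (i (α p)) * soGen N k l
              else soGen N (i r) (i (α r))).prod := by
      intro i
      rw [soLeibniz (soGen N k l) (List.finRange m)
        (fun j => soGen N (i j) (i (α j))) (List.nodup_finRange m),
        Fin.sum_univ_def]
    simp only [h1, soStep]
    rw [Finset.sum_comm]
    simp only [Finset.sum_sub_distrib]
    rw [sub_eq_zero]
    exact (Finset.sum_congr rfl fun p _ => soSwap N m α k l p).trans
      (Equiv.sum_comp α.symm fun p => ∑ i : Fin m → Fin N, ∑ e,
        soGen N k l (i (α p)) e • ((List.finRange m).map fun r =>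
          if r = p then soGen N (i p) e else soGen N (i r) (i (α r))).prod)
  exact (sub_eq_zero.mp hcomm).symm
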